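/- Let R be a complete discrete valuation ring with uniformizer-like element π (a nonzero nonunit), and let C• be a cochain complex of flat (equivalently, π-torsion-free) R-modules whose cohomology groups are all bounded π-torsion (each H^q(C•) is killed by some power of π). Then the π-adic completion Ĉ• of C• satisfies H^q(Ĉ•) ≅ H^q(C•) for all q; in particular Ĉ• ⊗_R K is exact, where K = Frac(R). -/

import Mathlib

/-- The cohomology at `B` of a pair of composable linear maps `f : A → B`, `g : B → C`
(with `g ∘ f = 0`): the quotient `ker g / im f`. -/
noncomputable abbrev pairCohomology {R A B C : Type*} [CommRing R]
    [AddCommGroup A] [Module R A] [AddCommGroup B] [Module R B]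
    [AddCommGroup C] [Module R C] (f : A →ₗ[R] B) (g : B →ₗ[R] C) : Type _ :=
  ↥(LinearMap.ker g) ⧸ (LinearMap.range f).comap (LinearMap.ker g).subtype

open LinearMap Submodule AdicCompletion

section Aux

variable {R : Type*} [CommRing R] (π : R)

lemma powTF {M : Type*} [AddCommGroup M] [Module R M]
    (htf : ∀ x : M, π • x = 0 → x = 0) (n : ℕ) (x : M) (hx : π ^ n • x = 0) : x = 0 := by
  induction n generalizing x with
  | zero => simpa using hx
  | succ n ih =>
    refine htf x (ih (π • x) ?_)
    rw [smul_smul, ← pow_succ]; exact hx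

lemma memSpanPow {M : Type*} [AddCommGroup M] [Module R M] (n : ℕ) (x : M) :
    x ∈ (Ideal.span {π} ^ n • ⊤ : Submodule R M) ↔ ∃ c, x = π ^ n • c := by
  constructor
  · intro hx
    refine Submodule.smul_induction_on hx ?_ ?_
    · intro r hr m _
      rw [Ideal.span_singleton_pow, Ideal.mem_span_singleton'] at hr
      obtain ⟨a, rfl⟩ := hr
      exact ⟨a • m, by rw [mul_comm, mul_smul]⟩
    · rintro x y ⟨c₁, rfl⟩ ⟨c₂, rfl⟩
      exact ⟨c₁ + c₂, by rw [smul_add]⟩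
  · rintro ⟨c, rfl⟩
    exact Submodule.smul_mem_smul (Ideal.pow_mem_pow (Ideal.mem_span_singleton_self π) n)
      Submodule.mem_top

end Aux

section Completion

variable {R : Type*} [CommRing R] (π : R)
variable {A B Cc D : Type*} [AddCommGroup A] [Module R A] [AddCommGroup B] [Module R B]
  [AddCommGroup Cc] [Module R Cc] [AddCommGroup D] [Module R D]

/-- The completion of a map, as an `R`-linear map. -/
noncomputable abbrev cmapAux (f : A →ₗ[R] B) :
    AdicCompletion (Ideal.span {π}) A →ₗ[R] AdicCompletion (Ideal.span {π}) B :=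
  (AdicCompletion.map (Ideal.span {π}) f).restrictScalars R

lemma cmapAux_of (f : A →ₗ[R] B) (x : A) :
    cmapAux π f (AdicCompletion.of (Ideal.span {π}) A x)
      = AdicCompletion.of (Ideal.span {π}) B (f x) := by
  apply AdicCompletion.ext
  intro n
  show (AdicCompletion.map (Ideal.span {π}) f _).val n = _
  rw [AdicCompletion.map_val_apply]
  simp [LinearMap.reduceModIdeal_apply]

lemma cmapAux_mk (f : A →ₗ[R] B) (a : AdicCauchySequence (Ideal.span {π}) A) (n : ℕ) :
    (cmapAux π f (AdicCompletion.mk (Ideal.span {π}) A a)).val n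
      = Submodule.Quotient.mk (f (a n)) := by
  show (AdicCompletion.map (Ideal.span {π}) f _).val n = _
  rw [AdicCompletion.map_mk]
  simp

/-- Bounded torsion gives elements of the range. -/
lemma rangeOfBdd {f : A →ₗ[R] B} {g : B →ₗ[R] Cc} {N : ℕ}
    (hN : ∀ y : pairCohomology f g, (π ^ N : R) • y = 0)
    (x : B) (hx : g x = 0) : ∃ e, π ^ N • x = f e := by
  have h0 := hN (Submodule.Quotient.mk (⟨x, LinearMap.mem_ker.mpr hx⟩ : LinearMap.ker g))
  rw [← Submodule.mkQ_apply, ← map_smul, Submodule.mkQ_apply,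
    Submodule.Quotient.mk_eq_zero] at h0
  obtain ⟨e, he⟩ := LinearMap.mem_range.mp (Submodule.mem_comap.mp h0)
  exact ⟨e, by simpa using he.symm⟩

lemma claimA {g : B →ₗ[R] Cc} {h : Cc →ₗ[R] D} (hhg : h ∘ₗ g = 0)
    (htfD : ∀ x : D, π • x = 0 → x = 0) {N₂ : ℕ}
    (hN₂ : ∀ y : pairCohomology g h, (π ^ N₂ : R) • y = 0)
    (n : ℕ) (x : B) (hx : ∃ y, g x = π ^ (N₂ + n) • y) :
    ∃ z c, g z = 0 ∧ x = z + π ^ n • c := by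
  obtain ⟨y, hy⟩ := hx
  have hy0 : h y = 0 := by
    apply powTF π htfD (N₂ + n)
    rw [← map_smul, ← hy]
    exact LinearMap.congr_fun hhg x
  obtain ⟨w, hw⟩ := rangeOfBdd π hN₂ y hy0
  refine ⟨x - π ^ n • w, w, ?_, by abel⟩
  rw [map_sub, map_smul, ← hw, hy, smul_smul, ← pow_add, add_comm n N₂, sub_self]

/-- The completion of a `π`-torsion-free module is `π`-torsion-free. -/
lemma completionTF (htf : ∀ x : B, π • x = 0 → x = 0)
    (x : AdicCompletion (Ideal.span {π}) B) (hx : π • x = 0) : x = 0 := by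
  apply AdicCompletion.ext
  intro n
  obtain ⟨v, hv⟩ := Submodule.Quotient.mk_surjective _ (x.val (n + 1))
  have h1 : π • v ∈ (Ideal.span {π} ^ (n + 1) • ⊤ : Submodule R B) := by
    rw [← Submodule.Quotient.mk_eq_zero, Submodule.Quotient.mk_smul, hv]
    rw [← AdicCompletion.val_smul_apply, hx, AdicCompletion.val_zero_apply]
  obtain ⟨c, hc⟩ := (memSpanPow π (n + 1) _).mp h1
  have hvc : v = π ^ n • c := by
    apply sub_eq_zero.mp
    apply htf
    rw [smul_sub, hc, smul_smul, ← pow_succ', sub_self]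
  have hval : x.val n = AdicCompletion.transitionMap (Ideal.span {π}) B
      (Nat.le_succ n) (x.val (n + 1)) := (x.property (Nat.le_succ n)).symm
  rw [hval, ← hv, AdicCompletion.val_zero_apply,
    Submodule.mapQ_apply, LinearMap.id_apply, hvc, Submodule.Quotient.mk_eq_zero]
  exact (memSpanPow π n _).mpr ⟨c, rfl⟩

/-- The natural comparison map from the cohomology of a complex to that of its completion. -/
noncomputable def compMap (f : A →ₗ[R] B) (g : B →ₗ[R] Cc) :
    pairCohomology f g →ₗ[R] pairCohomology (cmapAux π f) (cmapAux π g) :=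
  Submodule.liftQ _
    ((Submodule.mkQ _).comp (LinearMap.codRestrict (LinearMap.ker (cmapAux π g))
      ((AdicCompletion.of (Ideal.span {π}) B).comp (LinearMap.ker g).subtype)
      (fun x => by
        rw [LinearMap.mem_ker, LinearMap.comp_apply, Submodule.subtype_apply, cmapAux_of,
          LinearMap.mem_ker.mp x.2, _root_.map_zero])))
    (by
      intro x hx
      obtain ⟨a, ha⟩ := Submodule.mem_comap.mp hx
      rw [LinearMap.mem_ker, LinearMap.comp_apply, Submodule.mkQ_apply,
        Submodule.Quotient.mk_eq_zero]
      refine Submodule.mem_comap.mpr ⟨AdicCompletion.of (Ideal.span {π}) A a, ?_⟩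
      show cmapAux π f _ = _
      rw [cmapAux_of, ha]
      rfl)

lemma compMap_apply (f : A →ₗ[R] B) (g : B →ₗ[R] Cc) (z : LinearMap.ker g) :
    compMap π f g (Submodule.Quotient.mk z) =
      Submodule.Quotient.mk (⟨AdicCompletion.of (Ideal.span {π}) B z.1, by
        rw [LinearMap.mem_ker, cmapAux_of, LinearMap.mem_ker.mp z.2, _root_.map_zero]⟩ :
        LinearMap.ker (cmapAux π g)) := by
  rfl

end Completion

section Main

variable {R : Type*} [CommRing R] (π : R)
variable {A B Cc D : Type*} [AddCommGroup A] [Module R A] [AddCommGroup B] [Module R B]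
  [AddCommGroup Cc] [Module R Cc] [AddCommGroup D] [Module R D]

theorem mainBij (f : A →ₗ[R] B) (g : B →ₗ[R] Cc) (h : Cc →ₗ[R] D)
    (hgf : g ∘ₗ f = 0) (hhg : h ∘ₗ g = 0)
    (htfC : ∀ x : Cc, π • x = 0 → x = 0)
    (htfD : ∀ x : D, π • x = 0 → x = 0)
    (N₁ : ℕ) (hN₁ : ∀ y : pairCohomology f g, (π ^ N₁ : R) • y = 0)
    (N₂ : ℕ) (hN₂ : ∀ y : pairCohomology g h, (π ^ N₂ : R) • y = 0) :
    Function.Bijective (compMap π f g) := by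
  constructor
  · -- Injectivity
    rw [← LinearMap.ker_eq_bot, Submodule.eq_bot_iff]
    intro y hy
    obtain ⟨z, rfl⟩ := Submodule.Quotient.mk_surjective _ y
    rw [LinearMap.mem_ker, compMap_apply, Submodule.Quotient.mk_eq_zero] at hy
    obtain ⟨tt0, ht⟩ := LinearMap.mem_range.mp (Submodule.mem_comap.mp hy)
    have ht' : cmapAux π f tt0 = AdicCompletion.of (Ideal.span {π}) B z.1 := ht
    obtain ⟨ts, rfl⟩ := AdicCompletion.mk_surjective (Ideal.span {π}) A tt0
    have hcomp : (Submodule.Quotient.mk (f (ts N₁)) :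
        B ⧸ (Ideal.span {π} ^ N₁ • ⊤ : Submodule R B)) = Submodule.Quotient.mk z.1 := by
      have h0 := congrArg (fun w : AdicCompletion (Ideal.span {π}) B => w.val N₁) ht'
      simpa [cmapAux_mk] using h0
    obtain ⟨u, hu⟩ := (memSpanPow π N₁ _).mp ((Submodule.Quotient.eq _).mp hcomp.symm)
    have hgu : g u = 0 := by
      apply powTF π htfC N₁
      rw [← map_smul, ← hu, map_sub, LinearMap.mem_ker.mp z.2,
        show g (f (ts N₁)) = 0 from LinearMap.congr_fun hgf (ts N₁), sub_zero]
    obtain ⟨e, he⟩ := rangeOfBdd π hN₁ u hgu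
    rw [Submodule.Quotient.mk_eq_zero]
    refine Submodule.mem_comap.mpr ⟨ts N₁ + e, ?_⟩
    rw [map_add, ← he, ← hu]
    show f (ts N₁) + (z.1 - f (ts N₁)) = z.1
    abel
  · -- Surjectivity
    intro y
    obtain ⟨xk, rfl⟩ := Submodule.Quotient.mk_surjective _ y
    obtain ⟨a, ha⟩ := AdicCompletion.mk_surjective (Ideal.span {π}) B xk.1
    have hker : cmapAux π g xk.1 = 0 := LinearMap.mem_ker.mp xk.2
    have hga : ∀ n : ℕ, ∃ yn, g (a n) = π ^ n • yn := by
      intro n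
      apply (memSpanPow π n _).mp
      rw [← Submodule.Quotient.mk_eq_zero]
      have h0 : (cmapAux π g xk.1).val n = 0 := by rw [hker, AdicCompletion.val_zero_apply]
      rw [← ha, cmapAux_mk] at h0
      exact h0
    have hA : ∀ n : ℕ, ∃ z c, g z = 0 ∧ a (N₂ + n) = z + π ^ n • c :=
      fun n => claimA π hhg htfD hN₂ n _ (hga (N₂ + n))
    choose z c hz hzc using hA
    have hstep : ∀ n : ℕ, ∃ w, g w = 0 ∧ z (n + 1) - z n = π ^ n • w := by
      intro n
      have hc : a (N₂ + n) - a (N₂ + (n + 1)) ∈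
          (Ideal.span {π} ^ (N₂ + n) • ⊤ : Submodule R B) :=
        SModEq.sub_mem.mp (a.property (by omega))
      obtain ⟨e, he'⟩ := (memSpanPow π _ _).mp hc
      have he : a (N₂ + n) - a (N₂ + (n + 1)) = π ^ n • (π ^ N₂ • e) := by
        rw [he', smul_smul, ← pow_add, add_comm n N₂]
      refine ⟨c n - π • c (n + 1) - π ^ N₂ • e, ?_, ?_⟩
      · apply powTF π htfC n
        have hkey : z (n + 1) - z n = π ^ n • (c n - π • c (n + 1) - π ^ N₂ • e) :=
          by
            calc z (n + 1) - z n
                = π ^ n • c n - π ^ (n + 1) • c (n + 1) - (a (N₂ + n) - a (N₂ + (n + 1))) := by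
                  rw [hzc n, hzc (n + 1)]; abel
              _ = π ^ n • c n - π ^ (n + 1) • c (n + 1) - π ^ n • (π ^ N₂ • e) := by rw [he]
              _ = π ^ n • (c n - π • c (n + 1) - π ^ N₂ • e) := by
                  rw [smul_sub, smul_sub, smul_smul, smul_smul, ← pow_succ]
        rw [← map_smul, ← hkey, map_sub, hz (n + 1), hz n, sub_zero]
      · calc z (n + 1) - z n
            = π ^ n • c n - π ^ (n + 1) • c (n + 1) - (a (N₂ + n) - a (N₂ + (n + 1))) := by
              rw [hzc n, hzc (n + 1)]; abel
          _ = π ^ n • c n - π ^ (n + 1) • c (n + 1) - π ^ n • (π ^ N₂ • e) := by rw [he]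
          _ = π ^ n • (c n - π • c (n + 1) - π ^ N₂ • e) := by
              rw [smul_sub, smul_sub, smul_smul, smul_smul, ← pow_succ]
    choose w hw1 hw2 using hstep
    have hzr : ∀ n : ℕ, ∃ b, f b = z (N₁ + n) - z N₁ := by
      intro n
      induction n with
      | zero => exact ⟨0, by simp⟩
      | succ n ih =>
        obtain ⟨b, hb⟩ := ih
        obtain ⟨e, he⟩ := rangeOfBdd π hN₁ (w (N₁ + n)) (hw1 _)
        refine ⟨b + π ^ n • e, ?_⟩
        show f (b + π ^ n • e) = z (N₁ + n + 1) - z N₁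
        rw [map_add, map_smul, hb, ← he, smul_smul, ← pow_add, add_comm n N₁, ← hw2 (N₁ + n)]
        abel
    choose bb hbb using hzr
    have hyval : ∀ n : ℕ, (xk.1 - AdicCompletion.of (Ideal.span {π}) B (z N₁)).val n =
        Submodule.Quotient.mk (f (bb n)) := by
      intro n
      set m := N₂ + (N₁ + n) with hm
      have h5 : (xk.1 - AdicCompletion.of (Ideal.span {π}) B (z N₁)).val m =
          Submodule.Quotient.mk (a m - z N₁) := by
        rw [← ha, AdicCompletion.val_sub_apply, AdicCompletion.mk_apply_coe,
          AdicCompletion.of_apply, Submodule.mkQ_apply, Submodule.mkQ_apply,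
          ← Submodule.Quotient.mk_sub]
      have h6 := ((xk.1 - AdicCompletion.of (Ideal.span {π}) B (z N₁)).property
        (show n ≤ m by omega)).symm
      rw [h6, h5, Submodule.mapQ_apply, LinearMap.id_apply]
      rw [Submodule.Quotient.eq]
      have h7 : a m - z N₁ - f (bb n) = π ^ n • (π ^ N₁ • c (N₁ + n)) := by
        rw [hbb n, hzc (N₁ + n), smul_smul, ← pow_add, add_comm n N₁]
        abel
      rw [h7]
      exact (memSpanPow π n _).mpr ⟨_, rfl⟩
    have hdiff : ∀ n : ℕ, ∃ e, f (bb (n + 1)) - f (bb n) = π ^ n • f e := by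
      intro n
      obtain ⟨e, he⟩ := rangeOfBdd π hN₁ (w (N₁ + n)) (hw1 _)
      refine ⟨e, ?_⟩
      have hbb' : f (bb (n + 1)) = z (N₁ + n + 1) - z N₁ := hbb (n + 1)
      rw [hbb', hbb n, ← he, smul_smul, ← pow_add, add_comm n N₁, ← hw2 (N₁ + n)]
      abel
    choose ee hee using hdiff
    set t : ℕ → A := fun n => bb 0 + ∑ k ∈ Finset.range n, π ^ k • ee k with htdef
    have htsucc : ∀ n, t (n + 1) = t n + π ^ n • ee n := by
      intro n
      simp only [htdef, Finset.sum_range_succ]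
      abel
    have hcau : ∀ n, t n ≡ t (n + 1) [SMOD (Ideal.span {π} ^ n • ⊤ : Submodule R A)] := by
      intro n
      rw [SModEq.sub_mem, htsucc n]
      have h8 : t n - (t n + π ^ n • ee n) = π ^ n • (-ee n) := by rw [smul_neg]; abel
      rw [h8]
      exact (memSpanPow π n _).mpr ⟨_, rfl⟩
    have hft : ∀ n, f (t n) = f (bb n) := by
      intro n
      induction n with
      | zero => simp [htdef]
      | succ n ih =>
        rw [htsucc n, map_add, map_smul, ih, ← hee n]
        abel
    have hfinal : cmapAux π f (AdicCompletion.mk (Ideal.span {π}) A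
        (AdicCauchySequence.mk (Ideal.span {π}) A t hcau)) =
        xk.1 - AdicCompletion.of (Ideal.span {π}) B (z N₁) := by
      apply AdicCompletion.ext
      intro n
      rw [cmapAux_mk, hyval n]
      show Submodule.Quotient.mk (f (t n)) = _
      rw [hft n]
    refine ⟨Submodule.Quotient.mk ⟨z N₁, LinearMap.mem_ker.mpr (hz N₁)⟩, ?_⟩
    rw [compMap_apply, Submodule.Quotient.eq]
    refine Submodule.mem_comap.mpr (LinearMap.mem_range.mpr
      ⟨-(AdicCompletion.mk (Ideal.span {π}) A (AdicCauchySequence.mk (Ideal.span {π}) A t hcau)), ?_⟩)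
    rw [map_neg, hfinal, neg_sub]
    rfl

theorem mainResult (f : A →ₗ[R] B) (g : B →ₗ[R] Cc) (h : Cc →ₗ[R] D)
    (hgf : g ∘ₗ f = 0) (hhg : h ∘ₗ g = 0)
    (htfC : ∀ x : Cc, π • x = 0 → x = 0)
    (htfD : ∀ x : D, π • x = 0 → x = 0)
    (N₁ : ℕ) (hN₁ : ∀ y : pairCohomology f g, (π ^ N₁ : R) • y = 0)
    (N₂ : ℕ) (hN₂ : ∀ y : pairCohomology g h, (π ^ N₂ : R) • y = 0) :
    Nonempty (pairCohomology (cmapAux π f) (cmapAux π g) ≃ₗ[R] pairCohomology f g) ∧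
      ∀ y : pairCohomology (cmapAux π f) (cmapAux π g), (π ^ N₁ : R) • y = 0 := by
  have hbij := mainBij π f g h hgf hhg htfC htfD N₁ hN₁ N₂ hN₂
  constructor
  · exact ⟨(LinearEquiv.ofBijective _ hbij).symm⟩
  · intro y
    obtain ⟨x, rfl⟩ := hbij.2 y
    rw [← map_smul, hN₁ x, _root_.map_zero]

end Main

section DVR

lemma dvdPowOfNeZero {R : Type*} [CommRing R] [IsDomain R] [IsDiscreteValuationRing R]
    {π r : R} (hπ0 : π ≠ 0) (hπu : ¬IsUnit π) (hr : r ≠ 0) : ∃ n : ℕ, r ∣ π ^ n := by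
  obtain ⟨ϖ, hϖ⟩ := IsDiscreteValuationRing.exists_irreducible R
  obtain ⟨a, ha⟩ := IsDiscreteValuationRing.associated_pow_irreducible hr hϖ
  obtain ⟨mm, hm⟩ := IsDiscreteValuationRing.associated_pow_irreducible hπ0 hϖ
  have hm1 : 1 ≤ mm := by
    rcases Nat.eq_zero_or_pos mm with h0 | h
    · exfalso
      apply hπu
      rw [h0, pow_zero] at hm
      exact associated_one_iff_isUnit.mp hm
    · exact h
  refine ⟨a, ?_⟩
  have h1 : r ∣ ϖ ^ a := ha.dvd
  have h2 : ϖ ^ a ∣ ϖ ^ (mm * a) := pow_dvd_pow ϖ (Nat.le_mul_of_pos_left a hm1)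
  have h3 : ϖ ^ (mm * a) ∣ π ^ a := by
    rw [pow_mul]
    exact (hm.symm.pow_pow).dvd
  exact h1.trans (h2.trans h3)

end DVR


/-- Let `R` be a complete discrete valuation ring with nonzero nonunit `π`
and fraction field `K`, and let `C•` be a cochain complex of `π`-torsion-free (equivalently,
flat) `R`-modules whose cohomology groups are all bounded `π`-torsion.  Then the `π`-adic
completion `Ĉ•` of `C•` satisfies `H^q(Ĉ•) ≅ H^q(C•)` for all `q`; in particular `Ĉ• ⊗_R K`
is exact.  (Cohomology in degree `q+1` is the cohomology of the pair `(d q, d (q+1))`;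
as `q` ranges over `ℤ` this covers all degrees.) -/
theorem adic_completion_cohomology_of_bounded_torsion
    {R : Type*} [CommRing R] [IsDomain R] [IsDiscreteValuationRing R]
    (π : R) (hπ0 : π ≠ 0) (hπu : ¬IsUnit π)
    [IsAdicComplete (Ideal.span {π}) R]
    {K : Type*} [Field K] [Algebra R K] [IsFractionRing R K]
    (C : ℤ → Type*) [∀ q, AddCommGroup (C q)] [∀ q, Module R (C q)]
    (d : ∀ q : ℤ, C q →ₗ[R] C (q + 1))
    (hdd : ∀ q : ℤ, (d (q + 1)).comp (d q) = 0)
    (htf : ∀ (q : ℤ) (x : C q), π • x = 0 → x = 0)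
    (hbdd : ∀ q : ℤ, ∃ N : ℕ,
      ∀ y : pairCohomology (d q) (d (q + 1)), (π ^ N : R) • y = 0) :
    (∀ q : ℤ, Nonempty
      (pairCohomology
          ((AdicCompletion.map (Ideal.span {π}) (d q)).restrictScalars R)
          ((AdicCompletion.map (Ideal.span {π}) (d (q + 1))).restrictScalars R) ≃ₗ[R]
        pairCohomology (d q) (d (q + 1)))) ∧
    ∀ q : ℤ,
      LinearMap.range
          (((AdicCompletion.map (Ideal.span {π}) (d q)).restrictScalars R).baseChange K) =
        LinearMap.ker
          (((AdicCompletion.map (Ideal.span {π}) (d (q + 1))).restrictScalars R).baseChange K)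
    := by
  constructor
  · intro q
    obtain ⟨N₁, hN₁⟩ := hbdd q
    obtain ⟨N₂, hN₂⟩ := hbdd (q + 1)
    exact (mainResult π (d q) (d (q + 1)) (d (q + 1 + 1)) (hdd q) (hdd (q + 1))
      (htf (q + 1 + 1)) (htf (q + 1 + 1 + 1)) N₁ hN₁ N₂ hN₂).1
  · intro q
    obtain ⟨N₁, hN₁⟩ := hbdd q
    obtain ⟨N₂, hN₂⟩ := hbdd (q + 1)
    have hmain := (mainResult π (d q) (d (q + 1)) (d (q + 1 + 1)) (hdd q) (hdd (q + 1))
      (htf (q + 1 + 1)) (htf (q + 1 + 1 + 1)) N₁ hN₁ N₂ hN₂).2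
    apply le_antisymm
    · rw [LinearMap.range_le_ker_iff, ← LinearMap.baseChange_comp]
      have hc0 : (cmapAux π (d (q + 1))) ∘ₗ (cmapAux π (d q)) = 0 := by
        apply LinearMap.ext
        intro x
        show AdicCompletion.map _ (d (q + 1)) (AdicCompletion.map _ (d q) x) = 0
        rw [AdicCompletion.map_comp_apply, hdd q, AdicCompletion.map_zero,
          LinearMap.zero_apply]
      rw [hc0, LinearMap.baseChange_zero]
    · intro x hx
      haveI h1 : IsLocalizedModule (nonZeroDivisors R)
          (TensorProduct.mk R K (AdicCompletion (Ideal.span {π}) (C (q + 1))) 1) :=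
        (isLocalizedModule_iff_isBaseChange (nonZeroDivisors R) K _).mpr
          (TensorProduct.isBaseChange _ _ _)
      haveI h2 : IsLocalizedModule (nonZeroDivisors R)
          (TensorProduct.mk R K (AdicCompletion (Ideal.span {π}) (C (q + 1 + 1))) 1) :=
        (isLocalizedModule_iff_isBaseChange (nonZeroDivisors R) K _).mpr
          (TensorProduct.isBaseChange _ _ _)
      obtain ⟨⟨m, s⟩, hms⟩ := IsLocalizedModule.surj (nonZeroDivisors R)
        (TensorProduct.mk R K (AdicCompletion (Ideal.span {π}) (C (q + 1))) 1) x
      -- image of m under the completed differential is killed in the base change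
      have hgm1 : (TensorProduct.mk R K (AdicCompletion (Ideal.span {π}) (C (q + 1 + 1))) 1)
          (cmapAux π (d (q + 1)) m) = 0 := by
        have h3 := congrArg (LinearMap.baseChange K (cmapAux π (d (q + 1)))) hms
        rw [LinearMap.map_smul_of_tower, LinearMap.mem_ker.mp hx, smul_zero] at h3
        rw [TensorProduct.mk_apply, LinearMap.baseChange_tmul] at h3
        exact h3.symm
      obtain ⟨sc, hsc⟩ := IsLocalizedModule.exists_of_eq
        (S := nonZeroDivisors R)
        (f := TensorProduct.mk R K (AdicCompletion (Ideal.span {π}) (C (q + 1 + 1))) 1)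
        (x₁ := cmapAux π (d (q + 1)) m) (x₂ := 0)
        (by rw [hgm1, _root_.map_zero])
      have hsc' : (sc : R) • (cmapAux π (d (q + 1)) m) = 0 := by
        have h4 := hsc
        rw [Submonoid.smul_def, Submonoid.smul_def, smul_zero] at h4
        exact h4
      have hgm : cmapAux π (d (q + 1)) m = 0 := by
        obtain ⟨n, u, hu⟩ := dvdPowOfNeZero hπ0 hπu (nonZeroDivisors.coe_ne_zero sc)
        apply powTF π (completionTF π (htf (q + 1 + 1))) n
        rw [hu, mul_comm (sc : R) u, mul_smul, hsc', smul_zero]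
      have hmk : π ^ N₁ • m ∈ LinearMap.range (cmapAux π (d q)) := by
        have h0 := hmain (Submodule.Quotient.mk ⟨m, LinearMap.mem_ker.mpr hgm⟩)
        rw [← Submodule.mkQ_apply, ← map_smul, Submodule.mkQ_apply,
          Submodule.Quotient.mk_eq_zero] at h0
        exact Submodule.mem_comap.mp h0
      obtain ⟨tt, htt⟩ := hmk
      have hms' : (s : R) • x =
          (1 : K) ⊗ₜ[R] m := hms
      have hsx : (algebraMap R K (π ^ N₁ * s)) • x =
          (LinearMap.baseChange K (cmapAux π (d q))) ((1 : K) ⊗ₜ[R] tt) := by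
        rw [LinearMap.baseChange_tmul, htt, TensorProduct.tmul_smul, ← hms',
          map_mul, mul_smul, algebraMap_smul, algebraMap_smul]
      have hne : algebraMap R K (π ^ N₁ * s) ≠ 0 := by
        rw [map_ne_zero_iff _ (IsFractionRing.injective R K)]
        exact mul_ne_zero (pow_ne_zero _ hπ0) (nonZeroDivisors.coe_ne_zero s)
      have hxeq : x = (algebraMap R K (π ^ N₁ * s))⁻¹ • ((algebraMap R K (π ^ N₁ * s)) • x) :=
        (inv_smul_smul₀ hne x).symm
      rw [hxeq, hsx]
      exact Submodule.smul_mem _ _ (LinearMap.mem_range_self _ _)
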